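/- Let G be a simple graph with twin-quotient H, and let F be a twin-free simple graph (F contains no pair of true twins). If F is isomorphic to an induced subgraph of G (there is a graph embedding of F into G), then F is isomorphic to an induced subgraph of H (there is a graph embedding of F into H), obtained by composing the embedding with the quotient map sending each vertex to its twin-equivalence class. -/

import Mathlib

/-- Two vertices are *true twins* if they are adjacent and have the same
closed neighborhood. -/
def TrueTwins {V : Type*} (G : SimpleGraph V) (u v : V) : Prop :=
  G.Adj u v ∧ ∀ w, w ≠ u → w ≠ v → (G.Adj w u ↔ G.Adj w v)

/-- The twin equivalence: `u = v` or `u` and `v` are true twins. -/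
def twinSetoid {V : Type*} (G : SimpleGraph V) : Setoid V where
  r u v := u = v ∨ TrueTwins G u v
  iseqv := by
    constructor
    · intro u; exact Or.inl rfl
    · rintro u v (rfl | ⟨hadj, hnb⟩)
      · exact Or.inl rfl
      · exact Or.inr ⟨hadj.symm, fun w h1 h2 => (hnb w h2 h1).symm⟩
    · rintro u v w (rfl | huv) (rfl | hvw)
      · exact Or.inl rfl
      · exact Or.inr hvw
      · exact Or.inr huv
      · by_cases huw : u = w
        · exact Or.inl huw
        · refine Or.inr ⟨(hvw.2 u huv.1.ne huw).mp huv.1, fun x hxu hxw => ?_⟩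
          by_cases hxv : x = v
          · subst hxv
            exact iff_of_true huv.1.symm hvw.1
          · exact (huv.2 x hxu hxv).trans (hvw.2 x hxv hxw)

/-- The *twin-quotient* of `G`: vertices are twin-equivalence classes, two distinct
classes being adjacent iff some representatives are adjacent in `G`. -/
def twinQuotient {V : Type*} (G : SimpleGraph V) :
    SimpleGraph (Quotient (twinSetoid G)) where
  Adj C D := C ≠ D ∧ ∃ u v : V,
    Quotient.mk (twinSetoid G) u = C ∧ Quotient.mk (twinSetoid G) v = D ∧ G.Adj u v
  symm := by
    constructor
    rintro C D ⟨hne, u, v, hu, hv, hadj⟩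
    exact ⟨hne.symm, v, u, hv, hu, hadj.symm⟩
  loopless := by constructor; rintro C ⟨hne, -⟩; exact hne rfl

/-- If a twin-free graph `F` embeds into `G` as an induced subgraph, then `F` embeds
into the twin-quotient of `G` as an induced subgraph. -/
theorem embedding_twinQuotient_of_embedding {V W : Type*} (G : SimpleGraph V)
    (F : SimpleGraph W) (hF : ∀ a b : W, ¬ TrueTwins F a b)
    (h : Nonempty (F ↪g G)) :
    Nonempty (F ↪g twinQuotient G) := by
  obtain ⟨f⟩ := h
  -- if two images are twin-equivalent, the preimages are equal
  have hinj : ∀ a b : W, (twinSetoid G).r (f a) (f b) → a = b := by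
    intro a b hab
    rcases hab with heq | ⟨hadj, hnb⟩
    · exact f.injective heq
    · by_contra hne
      refine hF a b ⟨f.map_adj_iff.mp hadj, fun c hca hcb => ?_⟩
      have := hnb (f c) (fun h => hca (f.injective h)) (fun h => hcb (f.injective h))
      rw [f.map_adj_iff, f.map_adj_iff] at this
      exact this
  refine ⟨⟨⟨fun w => Quotient.mk (twinSetoid G) (f w), ?_⟩, ?_⟩⟩
  · intro a b hab
    exact hinj a b (Quotient.eq.mp hab)
  · intro a b
    show (twinQuotient G).Adj (Quotient.mk (twinSetoid G) (f a)) (Quotient.mk (twinSetoid G) (f b)) ↔ F.Adj a b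
    constructor
    · rintro ⟨hne, u, v, hu, hv, hadj⟩
      have hu' : (twinSetoid G).r u (f a) := Quotient.eq.mp hu
      have hv' : (twinSetoid G).r v (f b) := Quotient.eq.mp hv
      have hab : f a ≠ f b := fun h => hne (by rw [h])
      -- Adj u v → Adj (f a) v
      have step1 : G.Adj (f a) v := by
        rcases hu' with rfl | ⟨hadj', hnb'⟩
        · exact hadj
        · have hvu : v ≠ u := fun h => G.loopless.irrefl u (h ▸ hadj)
          have hvfa : v ≠ f a := by
            rintro rfl
            exact hne (Quotient.sound hv')
          exact ((hnb' v hvu hvfa).mp hadj.symm).symm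
      rcases hv' with rfl | ⟨hadj', hnb'⟩
      · exact f.map_adj_iff.mp step1
      · have hfav : f a ≠ v := fun h => G.loopless.irrefl (f a) (h ▸ step1)
        refine f.map_adj_iff.mp ((hnb' (f a) hfav hab).mp step1)
    · intro hab
      have hne' : a ≠ b := hab.ne
      refine ⟨fun h => hne' (hinj a b (Quotient.eq.mp h)), f a, f b, rfl, rfl,
        f.map_adj_iff.mpr hab⟩
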